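/- Let F : ℝ^d → ℝ attain a strict global minimum at x* and suppose exp(-F/T) is integrable for every T > 0. Define f^q_T(x) = exp(-F(x)/T)/∫exp(-F(y)/T)dy. If F is continuous and {x : F(x) ≤ F(x*) + δ} is bounded for some δ > 0, then for every ε > 0, ∫_{|x-x*|>ε} f^q_T(x) dx → 0 as T → 0⁺, i.e., the Gibbs measures concentrate at the global minimizer. -/

import Mathlib

open Real MeasureTheory Filter Topology

/-- Concentration of Gibbs measures at the global minimizer: if `F` is continuous with a
strict global minimum at `x*`, `exp(-F/T)` is integrable for every `T > 0`, and some
sublevel set `{F ≤ F(x*) + δ}` is bounded, then for every `ε > 0` the Gibbs mass outside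
the ball of radius `ε` around `x*` vanishes as `T → 0⁺`. -/
theorem gibbs_concentration {d : ℕ}
    (F : EuclideanSpace ℝ (Fin d) → ℝ) (hF_cont : Continuous F)
    (xstar : EuclideanSpace ℝ (Fin d))
    (hmin : ∀ x, x ≠ xstar → F xstar < F x)
    (hint : ∀ T : ℝ, 0 < T → Integrable (fun x => Real.exp (-F x / T)))
    (δ : ℝ) (hδ : 0 < δ)
    (hbdd : Bornology.IsBounded {x | F x ≤ F xstar + δ}) :
    ∀ ε : ℝ, 0 < ε →
      Tendsto (fun T =>
          ∫ x in {x | ε < dist x xstar},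
            Real.exp (-F x / T) / ∫ y, Real.exp (-F y / T))
        (𝓝[>] 0) (𝓝 0) := by
  intro ε hε
  set m := F xstar with hm
  -- Step 1: find c > 0 with m + c ≤ F x whenever ε ≤ dist x xstar
  obtain ⟨c, hc, hcF⟩ : ∃ c : ℝ, 0 < c ∧ ∀ x, ε ≤ dist x xstar → m + c ≤ F x := by
    have hKcl : IsClosed {x | F x ≤ m + δ} := isClosed_le hF_cont continuous_const
    have hKcpt : IsCompact {x | F x ≤ m + δ} :=
      Metric.isCompact_of_isClosed_isBounded hKcl hbdd
    have hScl : IsClosed {x : EuclideanSpace ℝ (Fin d) | ε ≤ dist x xstar} :=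
      isClosed_le continuous_const (continuous_id.dist continuous_const)
    set S := {x | F x ≤ m + δ} ∩ {x | ε ≤ dist x xstar} with hS
    have hScpt : IsCompact S := hKcpt.inter_right hScl
    rcases S.eq_empty_or_nonempty with hSe | hSne
    · refine ⟨δ, hδ, fun x hx => ?_⟩
      by_contra h
      push_neg at h
      have hxS : x ∈ S := ⟨h.le, hx⟩
      rw [hSe] at hxS
      simp at hxS
    · obtain ⟨x₀, hx₀S, hx₀min⟩ := hScpt.exists_isMinOn hSne hF_cont.continuousOn
      have hx₀ne : x₀ ≠ xstar := by
        intro h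
        have := hx₀S.2
        rw [h] at this
        simp only [Set.mem_setOf_eq, dist_self] at this
        linarith
      have hx₀pos : 0 < F x₀ - m := by have := hmin x₀ hx₀ne; linarith
      refine ⟨min δ (F x₀ - m), lt_min hδ hx₀pos, fun x hx => ?_⟩
      by_cases hxK : F x ≤ m + δ
      · have : F x₀ ≤ F x := hx₀min ⟨hxK, hx⟩
        have hmr := min_le_right δ (F x₀ - m)
        linarith
      · push_neg at hxK
        have hml := min_le_left δ (F x₀ - m)
        linarith
  -- Step 2: small ball where F ≤ m + c/2
  obtain ⟨r, hr, hrF⟩ : ∃ r : ℝ, 0 < r ∧ ∀ x ∈ Metric.ball xstar r, F x ≤ m + c / 2 := by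
    obtain ⟨r, hr, hsub⟩ := Metric.isOpen_iff.1 (isOpen_lt hF_cont continuous_const) xstar
      (show F xstar < m + c / 2 by rw [← hm]; linarith)
    exact ⟨r, hr, fun x hx => (hsub hx).le⟩
  set v := (volume (Metric.ball xstar r)).toReal with hv
  have hvpos : 0 < v := by
    rw [hv]
    exact ENNReal.toReal_pos (Metric.measure_ball_pos volume xstar hr).ne'
      (measure_ball_lt_top).ne
  have hC1 : Integrable (fun x : EuclideanSpace ℝ (Fin d) => Real.exp (-F x)) := by
    simpa using hint 1 one_pos
  set C₁ := ∫ x : EuclideanSpace ℝ (Fin d), Real.exp (-F x) with hC1def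
  have hC1nn : 0 ≤ C₁ := integral_nonneg fun x => (Real.exp_pos _).le
  set A := {x : EuclideanSpace ℝ (Fin d) | ε < dist x xstar} with hA
  have hAmeas : MeasurableSet A :=
    (isOpen_lt continuous_const (continuous_id.dist continuous_const)).measurableSet
  -- lower bound on the denominator, for all T > 0
  have hlow : ∀ T : ℝ, 0 < T →
      v * Real.exp (-(m + c / 2) / T) ≤ ∫ y, Real.exp (-F y / T) := by
    intro T hT
    have h1 : v * Real.exp (-(m + c / 2) / T)
        = ∫ _ in Metric.ball xstar r, Real.exp (-(m + c / 2) / T) := by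
      rw [setIntegral_const]; simp [hv, smul_eq_mul, Measure.real]
    rw [h1]
    have h2 : ∫ _ in Metric.ball xstar r, Real.exp (-(m + c / 2) / T)
        ≤ ∫ y in Metric.ball xstar r, Real.exp (-F y / T) := by
      refine setIntegral_mono_on (integrableOn_const (measure_ball_lt_top).ne)
        ((hint T hT).integrableOn) Metric.isOpen_ball.measurableSet fun x hx => ?_
      have := hrF x hx
      have h3 : -(m + c / 2) / T ≤ -F x / T :=
        (div_le_div_iff_of_pos_right hT).2 (by linarith)
      exact Real.exp_le_exp.2 h3
    refine h2.trans (setIntegral_le_integral (hint T hT) ?_)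
    filter_upwards with x using (Real.exp_pos _).le
  -- upper bound on the numerator, for 0 < T < 1
  have hup : ∀ T : ℝ, 0 < T → T < 1 →
      (∫ x in A, Real.exp (-F x / T))
        ≤ Real.exp (-(m + c) * (1 / T - 1)) * C₁ := by
    intro T hT hT1
    have hu : 1 ≤ 1 / T := by rw [le_div_iff₀ hT]; linarith
    have hptw : ∀ x ∈ A, Real.exp (-F x / T)
        ≤ Real.exp (-(m + c) * (1 / T - 1)) * Real.exp (-F x) := by
      intro x hx
      rw [← Real.exp_add]
      apply Real.exp_le_exp.2
      have hFx : m + c ≤ F x := hcF x (le_of_lt hx)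
      have key : -F x / T = -F x * (1 / T - 1) + -F x := by
        rw [mul_sub, mul_one, mul_one_div]; ring
      rw [key]
      have : -F x * (1 / T - 1) ≤ -(m + c) * (1 / T - 1) :=
        mul_le_mul_of_nonneg_right (by linarith) (by linarith)
      linarith
    calc ∫ x in A, Real.exp (-F x / T)
        ≤ ∫ x in A, Real.exp (-(m + c) * (1 / T - 1)) * Real.exp (-F x) :=
          setIntegral_mono_on ((hint T hT).integrableOn)
            ((hC1.const_mul _).integrableOn) hAmeas hptw
      _ = Real.exp (-(m + c) * (1 / T - 1)) * ∫ x in A, Real.exp (-F x) := by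
          rw [integral_const_mul]
      _ ≤ Real.exp (-(m + c) * (1 / T - 1)) * C₁ := by
          refine mul_le_mul_of_nonneg_left ?_ (Real.exp_pos _).le
          refine setIntegral_le_integral hC1 ?_
          filter_upwards with x using (Real.exp_pos _).le
  -- the squeezing bound
  set K := C₁ * Real.exp (m + c) / v with hK
  have hbound : ∀ T : ℝ, 0 < T → T < 1 →
      (∫ x in A, Real.exp (-F x / T) / ∫ y, Real.exp (-F y / T))
        ≤ K * Real.exp (-(c / 2) / T) := by
    intro T hT hT1
    rw [integral_div]
    have hIlow := hlow T hT
    have hIlowpos : 0 < v * Real.exp (-(m + c / 2) / T) :=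
      mul_pos hvpos (Real.exp_pos _)
    have h := div_le_div₀ (mul_nonneg (Real.exp_pos _).le hC1nn)
      (hup T hT hT1) hIlowpos hIlow
    refine h.trans (le_of_eq ?_)
    have hexp : -(m + c) * (1 / T - 1) = (m + c) + (-(c / 2) / T) + (-(m + c / 2) / T) := by
      field_simp
      ring
    rw [hexp, Real.exp_add, Real.exp_add]
    rw [hK]
    field_simp [Real.exp_ne_zero]
  -- nonnegativity
  have hnn : ∀ T : ℝ,
      0 ≤ ∫ x in A, Real.exp (-F x / T) / ∫ y, Real.exp (-F y / T) := by
    intro T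
    refine setIntegral_nonneg hAmeas fun x _ => ?_
    exact div_nonneg (Real.exp_pos _).le (integral_nonneg fun y => (Real.exp_pos _).le)
  -- the majorant tends to 0
  have hmaj : Tendsto (fun T : ℝ => K * Real.exp (-(c / 2) / T)) (𝓝[>] 0) (𝓝 0) := by
    have h1 : Tendsto (fun T : ℝ => -(c / 2) / T) (𝓝[>] 0) atBot := by
      have h3 : Tendsto (fun T : ℝ => (c / 2) * T⁻¹) (𝓝[>] (0:ℝ)) atTop :=
        tendsto_inv_nhdsGT_zero.const_mul_atTop (by linarith)
      have h4 := tendsto_neg_atTop_atBot.comp h3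
      have heq : (fun T : ℝ => -(c / 2) / T) = fun T : ℝ => -((c / 2) * T⁻¹) := by
        funext T; rw [div_eq_mul_inv]; ring
      rw [heq]; exact h4
    have h2 := (Real.tendsto_exp_atBot).comp h1
    have := h2.const_mul K
    simpa using this
  -- squeeze
  refine squeeze_zero' ?_ ?_ hmaj
  · filter_upwards with T using hnn T
  · filter_upwards [Ioo_mem_nhdsGT_of_mem (by constructor <;> norm_num :
      (0:ℝ) ∈ Set.Ico (0:ℝ) 1)] with T hT
    exact hbound T hT.1 hT.2
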